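/- Let X be a finite set with |X| = n ≥ 2, K a natural number with 1 ≤ K < n, α : X → ℝ with α(i) < 0 for every i, β a symmetric function assigning to each unordered pair {i,j} of distinct elements of X a value β(i,j) > 0, and B a real number. Define the QUBO objective of a subset S ⊆ X by O(S) = Σ_{i ∈ S} (α(i) − B·K + B/2) + Σ_{{i,j} ⊆ S, i ≠ j} (β(i,j) + B). If B > 2·max_{i ∈ X} |α(i)|, then for every S ⊆ X with |S| = K + l for some l ≥ 1 and every S' ⊆ S with |S'| = K, it holds that O(S') < O(S). -/
import Mathlib


/-- The QUBO objective of a selection `S`: each selected node `i` contributes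
`α i − B·K + B/2` and each unordered pair `{i,j} ⊆ S` of distinct selected nodes
contributes `β i j + B`. -/
noncomputable def quboObj {ι : Type*} [LinearOrder ι] (α : ι → ℝ) (β : ι → ι → ℝ)
    (B K : ℝ) (S : Finset ι) : ℝ :=
  (∑ i ∈ S, (α i - B * K + B / 2)) +
    ∑ p ∈ S.offDiag.filter (fun p => p.1 < p.2), (β p.1 p.2 + B)

/-- 'Too many nodes' half of the constraint-strength guarantee: if
`B > 2·max_{i ∈ X} |α(i)|`, then shrinking any selection of `K + l` nodes (`l ≥ 1`)
to any `K`-node subselection strictly decreases the QUBO objective. -/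
theorem qubo_too_many_nodes {ι : Type*} [LinearOrder ι] (X : Finset ι)
    (hX : X.Nonempty) (n : ℕ) (hXcard : X.card = n) (hn : 2 ≤ n)
    (K : ℕ) (hK : 1 ≤ K) (hKn : K < n)
    (α : ι → ℝ) (hα : ∀ i ∈ X, α i < 0)
    (β : ι → ι → ℝ) (hβsymm : ∀ i j, β i j = β j i)
    (hβpos : ∀ i ∈ X, ∀ j ∈ X, i ≠ j → 0 < β i j)
    (B : ℝ) (hB : B > 2 * X.sup' hX (fun i => |α i|)) :
    ∀ S ⊆ X, ∀ l : ℕ, 1 ≤ l → S.card = K + l →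
      ∀ S' ⊆ S, S'.card = K →
        quboObj α β B (K : ℝ) S' < quboObj α β B (K : ℝ) S := by
  intro S hSX l hl hScard S' hS'S hS'card
  have hB0 : 0 < B := by
    obtain ⟨i, hi⟩ := id hX
    have h1 : (0:ℝ) ≤ X.sup' hX (fun i => |α i|) :=
      le_trans (abs_nonneg (α i)) (Finset.le_sup' (f := fun i => |α i|) hi)
    linarith
  have hαB : ∀ i ∈ X, -(B/2) < α i := by
    intro i hi
    have h1 : |α i| ≤ X.sup' hX (fun i => |α i|) := Finset.le_sup' (f := fun i => |α i|) hi
    have h2 := neg_abs_le (α i)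
    linarith
  set T := S \ S' with hT
  have hTcard : T.card = l := by
    rw [hT, Finset.card_sdiff_of_subset hS'S, hScard, hS'card]; omega
  have hdisj : Disjoint S' T := Finset.disjoint_sdiff
  set ES := S.offDiag.filter (fun p => p.1 < p.2) with hES
  set ES' := S'.offDiag.filter (fun p => p.1 < p.2) with hES'
  have hESsub : ES' ⊆ ES := by
    apply Finset.filter_subset_filter
    intro p hp
    rw [Finset.mem_offDiag] at hp ⊢
    exact ⟨hS'S hp.1, hS'S hp.2.1, hp.2.2⟩
  set F := (T ×ˢ S').image (fun p : ι × ι => (min p.1 p.2, max p.1 p.2)) with hF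
  have hne : ∀ t ∈ T, ∀ s ∈ S', t ≠ s := by
    intro t ht s hs h
    exact Finset.disjoint_left.mp hdisj hs (h ▸ ht)
  have hinj : Set.InjOn (fun p : ι × ι => (min p.1 p.2, max p.1 p.2)) ↑(T ×ˢ S') := by
    rintro ⟨t, s⟩ hp ⟨t', s'⟩ hq h
    simp only [Finset.coe_product, Set.mem_prod, Finset.mem_coe] at hp hq
    obtain ⟨ht, hs⟩ := hp; obtain ⟨ht', hs'⟩ := hq
    simp only [Prod.mk.injEq] at h
    obtain ⟨h1, h2⟩ := h
    rcases le_total t s with hts | hts <;> rcases le_total t' s' with hts' | hts' <;>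
      simp [min_eq_left, min_eq_right, max_eq_left, max_eq_right, hts, hts'] at h1 h2
    · exact Prod.ext h1 h2
    · exact absurd h1 (hne t ht s' hs')
    · exact absurd h1.symm (hne t' ht' s hs)
    · exact Prod.ext h2 h1
  have hFsub : F ⊆ ES \ ES' := by
    intro p hp
    simp only [hF, Finset.mem_image, Finset.mem_product] at hp
    obtain ⟨⟨t, s⟩, ⟨ht, hs⟩, rfl⟩ := hp
    have htS : t ∈ S := Finset.sdiff_subset ht
    have hsS : s ∈ S := hS'S hs
    have htS' : t ∉ S' := (Finset.mem_sdiff.mp ht).2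
    have hts : t ≠ s := hne t ht s hs
    rw [Finset.mem_sdiff]
    constructor
    · simp only [hES, Finset.mem_filter, Finset.mem_offDiag]
      rcases lt_or_gt_of_ne hts with h | h
      · rw [min_eq_left h.le, max_eq_right h.le]; exact ⟨⟨htS, hsS, hts⟩, h⟩
      · rw [min_eq_right h.le, max_eq_left h.le]; exact ⟨⟨hsS, htS, hts.symm⟩, h⟩
    · simp only [hES', Finset.mem_filter, Finset.mem_offDiag]
      rintro ⟨⟨hm1, hm2, -⟩, -⟩
      rcases le_total t s with h | h
      · rw [min_eq_left h] at hm1; exact htS' hm1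
      · rw [max_eq_left h] at hm2; exact htS' hm2
  have hnode : ∑ i ∈ S, (α i - B * K + B / 2)
      = ∑ i ∈ S', (α i - B * K + B / 2) + ∑ i ∈ T, (α i - B * K + B / 2) := by
    rw [← Finset.sum_sdiff hS'S]; ring
  have hedge : ∑ p ∈ ES, (β p.1 p.2 + B)
      = ∑ p ∈ ES', (β p.1 p.2 + B) + ∑ p ∈ ES \ ES', (β p.1 p.2 + B) := by
    rw [← Finset.sum_sdiff hESsub]; ring
  have hTne : T.Nonempty := Finset.card_pos.mp (by omega)
  have h1 : -((l : ℝ) * (B * K)) < ∑ i ∈ T, (α i - B * K + B / 2) := by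
    have hlt : ∑ _i ∈ T, (-(B * K)) < ∑ i ∈ T, (α i - B * K + B / 2) := by
      apply Finset.sum_lt_sum_of_nonempty hTne
      intro i hi
      have := hαB i (hSX (Finset.sdiff_subset hi))
      linarith
    calc -((l : ℝ) * (B * K)) = ∑ _i ∈ T, (-(B * K)) := by
          rw [Finset.sum_const, hTcard, nsmul_eq_mul]; ring
      _ < _ := hlt
  have hFcard : F.card = l * K := by
    rw [hF, Finset.card_image_of_injOn hinj, Finset.card_product, hTcard, hS'card]
  have hβnn : ∀ p ∈ ES, 0 ≤ β p.1 p.2 + B := by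
    intro p hp
    simp only [hES, Finset.mem_filter, Finset.mem_offDiag] at hp
    have := hβpos p.1 (hSX hp.1.1) p.2 (hSX hp.1.2.1) hp.1.2.2
    linarith
  have h2 : (l : ℝ) * (K : ℝ) * B ≤ ∑ p ∈ ES \ ES', (β p.1 p.2 + B) := by
    calc (l : ℝ) * (K : ℝ) * B = ∑ _p ∈ F, B := by
          rw [Finset.sum_const, hFcard]; push_cast; ring
      _ ≤ ∑ p ∈ F, (β p.1 p.2 + B) := by
          apply Finset.sum_le_sum
          intro p hp
          have := hβnn p (Finset.mem_sdiff.mp (hFsub hp)).1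
          have hBle : B ≤ β p.1 p.2 + B := by
            have hpE := (Finset.mem_sdiff.mp (hFsub hp)).1
            simp only [hES, Finset.mem_filter, Finset.mem_offDiag] at hpE
            have := hβpos p.1 (hSX hpE.1.1) p.2 (hSX hpE.1.2.1) hpE.1.2.2
            linarith
          exact hBle
      _ ≤ ∑ p ∈ ES \ ES', (β p.1 p.2 + B) := by
          apply Finset.sum_le_sum_of_subset_of_nonneg hFsub
          intro p hp _
          exact hβnn p (Finset.mem_sdiff.mp hp).1
  simp only [quboObj, ← hES, ← hES']
  rw [hnode, hedge]
  linarith
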